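/- For the quantum walk on a line of length L with nondegenerate eigenvalues, the limiting distribution starting from vertex c equals π(m|c) = ∑_{j=1}^{L} |φ^{(j)}_m|² |φ^{(j)}_c|² = (2 + δ_{m,c} + δ_{m,L+1−c}) / (2(L+1)) for all m, c ∈ {1,…,L}. -/

import Mathlib

open Finset Real


lemma cos_sum_range (n : ℕ) (hn : 0 < n) (k : ℤ) :
    ∑ j ∈ Finset.range n, Real.cos (2 * Real.pi * j * k / n) =
      if (n:ℤ) ∣ k then (n:ℝ) else 0 := by
  have hn' : (n:ℝ) ≠ 0 := by positivity
  by_cases hd : (n:ℤ) ∣ k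
  · obtain ⟨t, rfl⟩ := hd
    rw [if_pos ⟨t, rfl⟩]
    have : ∀ j ∈ Finset.range n, Real.cos (2 * Real.pi * j * ((n*t:ℤ):ℝ) / n) = 1 := by
      intro j _
      have harg : 2 * Real.pi * j * ((n*t:ℤ):ℝ) / n = ((j*t : ℤ):ℝ) * (2*Real.pi) := by
        push_cast; field_simp
      rw [harg, Real.cos_int_mul_two_pi]
    rw [Finset.sum_congr rfl this]
    simp
  · rw [if_neg hd]
    set z : ℂ := Complex.exp (2 * Real.pi * k / n * Complex.I) with hz
    have hz1 : z ≠ 1 := by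
      intro h
      rw [hz, Complex.exp_eq_one_iff] at h
      obtain ⟨t, ht⟩ := h
      have h2 : ((2 * Real.pi * k / n : ℝ) : ℂ) * Complex.I = ((t * (2*Real.pi) : ℝ):ℂ) * Complex.I := by
        push_cast; linear_combination ht
      have h3 : (2 * Real.pi * k / n : ℝ) = (t * (2*Real.pi) : ℝ) := by
        exact_mod_cast mul_right_cancel₀ Complex.I_ne_zero h2
      have hpi := Real.pi_ne_zero
      have h4 : (k:ℝ) = ((n*t : ℤ):ℝ) := by
        push_cast
        field_simp at h3
        have h5 : (2*Real.pi) * ((k:ℝ) - n*t) = 0 := by linear_combination (2*Real.pi) * h3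
        have h6 : ((k:ℝ) - n*t) = 0 := by
          rcases mul_eq_zero.mp h5 with h | h
          · exact absurd h (by positivity)
          · exact h
        linarith
      have : k = n*t := by exact_mod_cast h4
      exact hd ⟨t, this⟩
    have hzn : z ^ n = 1 := by
      rw [hz, ← Complex.exp_nat_mul]
      have : (n:ℂ) * (2 * Real.pi * k / n * Complex.I) = k * (2 * Real.pi * Complex.I) := by
        have : (n:ℂ) ≠ 0 := by exact_mod_cast hn'
        field_simp
      rw [this]
      exact Complex.exp_int_mul_two_pi_mul_I k
    have hsum : ∑ j ∈ Finset.range n, z ^ j = 0 := by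
      rw [geom_sum_eq hz1, hzn]; simp
    have hre : ∀ j ∈ Finset.range n, Real.cos (2 * Real.pi * j * k / n) = (z ^ j).re := by
      intro j _
      rw [hz, ← Complex.exp_nat_mul]
      have : (j:ℂ) * (2 * Real.pi * k / n * Complex.I) = ((2 * Real.pi * j * k / n : ℝ):ℂ) * Complex.I := by
        push_cast; ring
      rw [this, Complex.exp_ofReal_mul_I_re]
    rw [Finset.sum_congr rfl hre, ← Complex.re_sum, hsum]
    simp

lemma cos_sum_fin (L : ℕ) (k : ℤ) :
    ∑ j : Fin L, Real.cos (2 * Real.pi * (((j:ℕ):ℝ) + 1) * (k:ℝ) / ((L:ℝ) + 1)) =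
      (if ((L:ℤ) + 1) ∣ k then ((L:ℝ) + 1) else 0) - 1 := by
  have h := cos_sum_range (L+1) (by omega) k
  rw [Finset.sum_range_succ'] at h
  norm_num at h
  push_cast at h
  rw [Fin.sum_univ_eq_sum_range
    (fun x : ℕ => Real.cos (2 * Real.pi * ((x:ℝ) + 1) * (k:ℝ) / ((L:ℝ) + 1))) L]
  linarith [h]

lemma sinsq_mul (x y : ℝ) :
    Real.sin x ^ 2 * Real.sin y ^ 2 =
      1/4 * (1 - Real.cos (2*x) - Real.cos (2*y)
        + (Real.cos (2*x + 2*y) + Real.cos (2*x - 2*y)) / 2) := by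
  rw [Real.cos_add, Real.cos_sub]
  simp only [Real.cos_two_mul, Real.sin_two_mul]
  linear_combination (Real.sin y ^ 2) * Real.sin_sq_add_cos_sq x
    + (1 - Real.cos x ^ 2) * Real.sin_sq_add_cos_sq y

theorem stmt_3 (L : ℕ) (hL : 1 ≤ L)
    (φ : Fin L → Fin L → ℝ)
    (hφ : ∀ j k : Fin L,
      φ j k = Real.sqrt (2 / (L + 1)) *
        Real.sin (((j : ℕ) + 1) * ((k : ℕ) + 1) * Real.pi / (L + 1)))
    (m c : Fin L) :
    ∑ j : Fin L, (φ j m) ^ 2 * (φ j c) ^ 2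
      = (2 + (if m = c then (1 : ℝ) else 0)
           + (if ((m : ℕ) + 1) + ((c : ℕ) + 1) = L + 1 then (1 : ℝ) else 0))
        / (2 * (L + 1)) := by
  have hn : ((L:ℝ) + 1) ≠ 0 := by positivity
  have hsq : Real.sqrt (2 / ((L:ℝ) + 1)) ^ 2 = 2 / ((L:ℝ) + 1) :=
    Real.sq_sqrt (by positivity)
  have h1 : (m:ℕ) < L := m.isLt
  have h2 : (c:ℕ) < L := c.isLt
  -- divisibility facts
  have hda : ¬ ((L:ℤ) + 1) ∣ (((m:ℕ):ℤ) + 1) := by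
    intro h
    have := Int.eq_zero_of_dvd_of_natAbs_lt_natAbs h (by omega)
    omega
  have hdb : ¬ ((L:ℤ) + 1) ∣ (((c:ℕ):ℤ) + 1) := by
    intro h
    have := Int.eq_zero_of_dvd_of_natAbs_lt_natAbs h (by omega)
    omega
  have hdab : (((L:ℤ) + 1) ∣ ((((m:ℕ):ℤ) + 1) + (((c:ℕ):ℤ) + 1))) ↔
      ((m:ℕ) + 1) + ((c:ℕ) + 1) = L + 1 := by
    constructor
    · intro h
      have h3 : ((L:ℤ) + 1) ∣ (((((m:ℕ):ℤ) + 1) + (((c:ℕ):ℤ) + 1)) - ((L:ℤ) + 1)) :=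
        dvd_sub h dvd_rfl
      have := Int.eq_zero_of_dvd_of_natAbs_lt_natAbs h3 (by
        rw [Int.natAbs_lt_iff_sq_lt] <;> push_cast <;> nlinarith)
      omega
    · intro h
      exact ⟨1, by omega⟩
  have hdsub : (((L:ℤ) + 1) ∣ ((((m:ℕ):ℤ) + 1) - (((c:ℕ):ℤ) + 1))) ↔ m = c := by
    constructor
    · intro h
      have := Int.eq_zero_of_dvd_of_natAbs_lt_natAbs h (by
        rw [Int.natAbs_lt_iff_sq_lt] <;> push_cast <;> nlinarith)
      exact Fin.ext (by omega)
    · intro h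
      exact ⟨0, by rw [h]; ring⟩
  -- the four cosine sums
  have S1 : ∑ j : Fin L, Real.cos (2 * Real.pi * (((j:ℕ):ℝ) + 1) * (((m:ℕ):ℝ) + 1) / ((L:ℝ) + 1))
      = -1 := by
    have h := cos_sum_fin L (((m:ℕ):ℤ) + 1)
    rw [if_neg hda] at h
    push_cast at h
    linarith [h]
  have S2 : ∑ j : Fin L, Real.cos (2 * Real.pi * (((j:ℕ):ℝ) + 1) * (((c:ℕ):ℝ) + 1) / ((L:ℝ) + 1))
      = -1 := by
    have h := cos_sum_fin L (((c:ℕ):ℤ) + 1)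
    rw [if_neg hdb] at h
    push_cast at h
    linarith [h]
  have S3 : ∑ j : Fin L, Real.cos (2 * Real.pi * (((j:ℕ):ℝ) + 1) * ((((m:ℕ):ℝ) + 1) + (((c:ℕ):ℝ) + 1)) / ((L:ℝ) + 1))
      = (if ((m:ℕ) + 1) + ((c:ℕ) + 1) = L + 1 then ((L:ℝ) + 1) else 0) - 1 := by
    have h := cos_sum_fin L ((((m:ℕ):ℤ) + 1) + (((c:ℕ):ℤ) + 1))
    simp only [hdab] at h
    push_cast at h
    linarith [h]
  have S4 : ∑ j : Fin L, Real.cos (2 * Real.pi * (((j:ℕ):ℝ) + 1) * ((((m:ℕ):ℝ) + 1) - (((c:ℕ):ℝ) + 1)) / ((L:ℝ) + 1))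
      = (if m = c then ((L:ℝ) + 1) else 0) - 1 := by
    have h := cos_sum_fin L ((((m:ℕ):ℤ) + 1) - (((c:ℕ):ℤ) + 1))
    simp only [hdsub] at h
    push_cast at h
    linarith [h]
  have key : ∀ j ∈ (Finset.univ : Finset (Fin L)),
      (φ j m) ^ 2 * (φ j c) ^ 2 =
      ((1/((L:ℝ)+1))^2) * (1
        - Real.cos (2 * Real.pi * (((j:ℕ):ℝ) + 1) * (((m:ℕ):ℝ) + 1) / ((L:ℝ) + 1))
        - Real.cos (2 * Real.pi * (((j:ℕ):ℝ) + 1) * (((c:ℕ):ℝ) + 1) / ((L:ℝ) + 1))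
        + (Real.cos (2 * Real.pi * (((j:ℕ):ℝ) + 1) * ((((m:ℕ):ℝ) + 1) + (((c:ℕ):ℝ) + 1)) / ((L:ℝ) + 1))
          + Real.cos (2 * Real.pi * (((j:ℕ):ℝ) + 1) * ((((m:ℕ):ℝ) + 1) - (((c:ℕ):ℝ) + 1)) / ((L:ℝ) + 1))) / 2) := by
    intro j _
    rw [hφ j m, hφ j c, mul_pow, mul_pow, hsq]
    have e1 : (2 * Real.pi * (((j:ℕ):ℝ) + 1) * (((m:ℕ):ℝ) + 1) / ((L:ℝ) + 1))
        = 2 * ((((j:ℕ):ℝ) + 1) * (((m:ℕ):ℝ) + 1) * Real.pi / ((L:ℝ) + 1)) := by ring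
    have e2 : (2 * Real.pi * (((j:ℕ):ℝ) + 1) * (((c:ℕ):ℝ) + 1) / ((L:ℝ) + 1))
        = 2 * ((((j:ℕ):ℝ) + 1) * (((c:ℕ):ℝ) + 1) * Real.pi / ((L:ℝ) + 1)) := by ring
    have e3 : (2 * Real.pi * (((j:ℕ):ℝ) + 1) * ((((m:ℕ):ℝ) + 1) + (((c:ℕ):ℝ) + 1)) / ((L:ℝ) + 1))
        = 2 * ((((j:ℕ):ℝ) + 1) * (((m:ℕ):ℝ) + 1) * Real.pi / ((L:ℝ) + 1))
          + 2 * ((((j:ℕ):ℝ) + 1) * (((c:ℕ):ℝ) + 1) * Real.pi / ((L:ℝ) + 1)) := by ring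
    have e4 : (2 * Real.pi * (((j:ℕ):ℝ) + 1) * ((((m:ℕ):ℝ) + 1) - (((c:ℕ):ℝ) + 1)) / ((L:ℝ) + 1))
        = 2 * ((((j:ℕ):ℝ) + 1) * (((m:ℕ):ℝ) + 1) * Real.pi / ((L:ℝ) + 1))
          - 2 * ((((j:ℕ):ℝ) + 1) * (((c:ℕ):ℝ) + 1) * Real.pi / ((L:ℝ) + 1)) := by ring
    rw [e1, e2, e3, e4]
    linear_combination (4*(1/((L:ℝ)+1))^2) *
      sinsq_mul ((((j:ℕ):ℝ) + 1) * (((m:ℕ):ℝ) + 1) * Real.pi / ((L:ℝ) + 1))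
        ((((j:ℕ):ℝ) + 1) * (((c:ℕ):ℝ) + 1) * Real.pi / ((L:ℝ) + 1))
  rw [Finset.sum_congr rfl key, ← Finset.mul_sum]
  rw [Finset.sum_add_distrib, Finset.sum_sub_distrib, Finset.sum_sub_distrib,
    Finset.sum_const, ← Finset.sum_div, Finset.sum_add_distrib]
  rw [S1, S2, S3, S4]
  simp only [Finset.card_univ, Fintype.card_fin, nsmul_eq_mul, mul_one]
  by_cases ha : m = c
  · by_cases hb : ((m:ℕ) + 1) + ((c:ℕ) + 1) = L + 1
    · rw [if_pos ha, if_pos ha, if_pos hb, if_pos hb]; field_simp; ring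
    · rw [if_pos ha, if_pos ha, if_neg hb, if_neg hb]; field_simp; ring
  · by_cases hb : ((m:ℕ) + 1) + ((c:ℕ) + 1) = L + 1
    · rw [if_neg ha, if_neg ha, if_pos hb, if_pos hb]; field_simp; ring
    · rw [if_neg ha, if_neg ha, if_neg hb, if_neg hb]; field_simp; ring
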